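/- Let κ be a regular uncountable cardinal and assume principle C⁻(κ). Then there is no κ-Luzin gap, i.e., there is no almost disjoint family 𝓐 of infinite subsets of ℕ with |𝓐| = κ such that no X ⊆ ℕ satisfies both |{A ∈ 𝓐 : A ∖ X is finite}| = κ and |{A ∈ 𝓐 : A ∩ X is finite}| = κ. -/

import Mathlib

open Cardinal

lemma split_lemma {τ : Type} {κ : Cardinal.{0}} (hκ : ℵ₀ ≤ κ)
    {D₀ D₁ : Set τ} (h₀ : #D₀ = κ) (h₁ : #D₁ = κ) :
    ∃ E₀ E₁ : Set τ, E₀ ⊆ D₀ ∧ E₁ ⊆ D₁ ∧ Disjoint E₀ E₁ ∧ #E₀ = κ ∧ #E₁ = κ := by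
  by_cases h : #(D₀ \ D₁ : Set τ) = κ
  · exact ⟨D₀ \ D₁, D₁, Set.diff_subset, subset_rfl, Set.disjoint_sdiff_left, h, h₁⟩
  · have hle : #(D₀ \ D₁ : Set τ) ≤ κ := h₀ ▸ mk_le_mk_of_subset Set.diff_subset
    have hlt : #(D₀ \ D₁ : Set τ) < κ := lt_of_le_of_ne hle h
    have hinter : #(D₀ ∩ D₁ : Set τ) = κ := by
      refine le_antisymm (h₀ ▸ mk_le_mk_of_subset Set.inter_subset_left) ?_
      by_contra hl
      push_neg at hl
      have h2 : #D₀ ≤ #(D₀ \ D₁ : Set τ) + #(D₀ ∩ D₁ : Set τ) := by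
        calc #D₀ = #((D₀ \ D₁) ∪ (D₀ ∩ D₁) : Set τ) := by rw [Set.diff_union_inter]
        _ ≤ _ := mk_union_le _ _
      exact absurd (h₀ ▸ h2) (not_le.mpr (add_lt_of_lt hκ hlt hl))
    have hsum : #(↥(D₀ ∩ D₁) ⊕ ↥(D₀ ∩ D₁)) = #(D₀ ∩ D₁ : Set τ) := by
      simp only [mk_sum, lift_id, hinter]; exact add_eq_self hκ
    obtain ⟨q⟩ := Cardinal.eq.mp hsum
    refine ⟨Subtype.val '' (Set.range (q ∘ Sum.inl)), Subtype.val '' (Set.range (q ∘ Sum.inr)),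
      ?_, ?_, ?_, ?_, ?_⟩
    · exact (Set.image_subset_range _ _).trans (by rw [Subtype.range_coe]; exact Set.inter_subset_left)
    · exact (Set.image_subset_range _ _).trans (by rw [Subtype.range_coe]; exact Set.inter_subset_right)
    · rw [Set.disjoint_left]
      rintro x ⟨a, ⟨a', rfl⟩, rfl⟩ ⟨b, ⟨b', hb'⟩, hbv⟩
      have : q (Sum.inl a') = q (Sum.inr b') := by
        apply Subtype.ext
        have : (b : τ) = ((q (Sum.inl a') : τ)) := hbv
        rw [← hb'] at this
        exact this.symm
      simpa using q.injective this
    · rw [mk_image_eq Subtype.val_injective, mk_range_eq _ (q.injective.comp Sum.inl_injective),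
        hinter]
    · rw [mk_image_eq Subtype.val_injective, mk_range_eq _ (q.injective.comp Sum.inr_injective),
        hinter]

lemma get_nn (n : ℕ) (i : Fin ([n, n] : List ℕ).length) : ([n, n] : List ℕ).get i = n := by
  have hi2 : (i : ℕ) < 2 := i.isLt
  obtain h | h : (i : ℕ) = 0 ∨ (i : ℕ) = 1 := by omega
  · simp [List.get, h]
  · simp [List.get, h]

/-- `C` is closed and unbounded (club) in the ordinal `o`. -/
def ClubIn (o : Ordinal) (C : Set Ordinal) : Prop :=
  C ⊆ Set.Iio o ∧ (∀ α < o, ∃ β ∈ C, α < β) ∧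
    ∀ α < o, 0 < α → (∀ β < α, ∃ γ ∈ C, β < γ ∧ γ < α) → α ∈ C

/-- `S` is a stationary subset of the ordinal `o`: it meets every club subset of `o`. -/
def StationaryIn (o : Ordinal) (S : Set Ordinal) : Prop :=
  S ⊆ Set.Iio o ∧ ∀ C, ClubIn o C → (S ∩ C).Nonempty

/-- `S` is a cofinal (unbounded) subset of the ordinal `o`. -/
def CofinalIn (o : Ordinal) (S : Set Ordinal) : Prop :=
  S ⊆ Set.Iio o ∧ ∀ α < o, ∃ β ∈ S, α < β

/-- For a matrix `A` of subsets of `ℕ`, a finite sequence `t ∈ ω^{<ω}` and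
`s : {0,…,|t|-1} → Ordinal`, this is `A[s,t] = ⋂_{i<|t|} A(s i, t i)`. -/
def MatInt (A : Ordinal → ℕ → Set ℕ) (t : List ℕ) (s : Fin t.length → Ordinal) : Set ℕ :=
  ⋂ i, A (s i) (t.get i)

/-- Principle C⁻(κ). -/
def PrincipleCminus (κ : Cardinal) : Prop :=
  ∀ (T : Set (List ℕ)) (A : Ordinal → ℕ → Set ℕ),
    (∃ S : Set Ordinal, CofinalIn κ.ord S ∧
      ∀ t ∈ T, ∀ s : Fin t.length → Ordinal, Function.Injective s →
        (∀ i, s i ∈ S) → (MatInt A t s).Nonempty) ∨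
    (∃ t ∈ T, ∃ D : Fin t.length → Set Ordinal,
      (∀ i, CofinalIn κ.ord (D i)) ∧
      ∀ s : Fin t.length → Ordinal, Function.Injective s →
        (∀ i, s i ∈ D i) → MatInt A t s = ∅)

/-- Under C⁻(κ), there is no κ-Luzin gap. -/
theorem statement_13 (κ : Cardinal.{0}) (hreg : κ.IsRegular) (hunc : ℵ₀ < κ)
    (hC : PrincipleCminus κ) :
    ¬ ∃ 𝓐 : Set (Set ℕ),
        (∀ A ∈ 𝓐, A.Infinite) ∧
        (∀ A ∈ 𝓐, ∀ A' ∈ 𝓐, A ≠ A' → (A ∩ A').Finite) ∧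
        #𝓐 = κ ∧
        ¬ ∃ X : Set ℕ, #{A : Set ℕ | A ∈ 𝓐 ∧ (A \ X).Finite} = κ ∧
            #{A : Set ℕ | A ∈ 𝓐 ∧ (A ∩ X).Finite} = κ := by
  rintro ⟨𝓐, hinf, had, hA, hsep⟩
  -- enumeration of 𝓐 by κ.ord.toType
  have hmkt : #κ.ord.ToType = #↥𝓐 := by
    rw [Cardinal.mk_toType, Cardinal.card_ord, hA]
  obtain ⟨e⟩ := Cardinal.eq.mp hmkt
  set g := (Ordinal.ToType.mk (o := κ.ord)) with hg
  -- the function from ordinals to elements of 𝓐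
  set f : Ordinal → Set ℕ := fun α =>
    if h : α < κ.ord then (e (g ⟨α, h⟩) : Set ℕ) else ∅ with hf
  set F : κ.ord.ToType → Set ℕ := fun x => (e x : Set ℕ) with hF
  have hfval : ∀ α (h : α < κ.ord), f α = F (g ⟨α, h⟩) := fun α h => dif_pos h
  have hfF : ∀ x : κ.ord.ToType, f ((g.symm x : Set.Iio κ.ord) : Ordinal) = F x := by
    intro x
    have hlt : ((g.symm x : Set.Iio κ.ord) : Ordinal) < κ.ord := (g.symm x).2
    rw [hfval _ hlt]
    have : (⟨((g.symm x : Set.Iio κ.ord) : Ordinal), hlt⟩ : Set.Iio κ.ord) = g.symm x :=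
      Subtype.ext rfl
    rw [this, OrderIso.apply_symm_apply]
  have hFmem : ∀ x, F x ∈ 𝓐 := fun x => (e x).2
  have hFinj : Function.Injective F := by
    intro x y hxy
    exact e.injective (Subtype.ext hxy)
  have hfinj : Set.InjOn f (Set.Iio κ.ord) := by
    intro a ha b hb hab
    rw [hfval a ha, hfval b hb] at hab
    have := g.injective (hFinj hab)
    exact congrArg Subtype.val this
  -- the matrix and T
  set A : Ordinal → ℕ → Set ℕ := fun α n => {m | m ∈ f α ∧ n ≤ m} with hAdef
  set T : Set (List ℕ) := Set.range (fun n : ℕ => [n, n]) with hT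
  rcases hC T A with ⟨S, ⟨hS1, hS2⟩, hS⟩ | ⟨t, ht, D, hDcof, hD⟩
  · -- case 1 : impossible by almost disjointness
    have hpos : (0 : Ordinal) < κ.ord := by
      rw [Cardinal.lt_ord]
      simpa using hreg.pos
    obtain ⟨α, hαS, -⟩ := hS2 0 hpos
    have hαlt := hS1 hαS
    obtain ⟨β, hβS, hαβ⟩ := hS2 α hαlt
    have hβlt := hS1 hβS
    have hne : α ≠ β := ne_of_lt hαβ
    have hfne : f α ≠ f β := fun hh => hne (hfinj hαlt hβlt hh)
    have hfin : (f α ∩ f β).Finite := by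
      apply had _ ?_ _ ?_ hfne
      · rw [hfval _ hαlt]; exact hFmem _
      · rw [hfval _ hβlt]; exact hFmem _
    obtain ⟨b, hb⟩ := hfin.bddAbove
    set n := b + 1 with hn
    set s : Fin ([n, n] : List ℕ).length → Ordinal := fun i => if (i : ℕ) = 0 then α else β
      with hsdef
    have hsinj : Function.Injective s := by
      intro i j hij
      have hi : (i : ℕ) < 2 := i.isLt
      have hj : (j : ℕ) < 2 := j.isLt
      simp only [hsdef] at hij
      by_cases c1 : (i : ℕ) = 0 <;> by_cases c2 : (j : ℕ) = 0
      · exact Fin.ext (c1.trans c2.symm)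
      · rw [if_pos c1, if_neg c2] at hij; exact absurd hij hne
      · rw [if_neg c1, if_pos c2] at hij; exact absurd hij.symm hne
      · apply Fin.ext; omega
    have hsmem : ∀ i, s i ∈ S := by
      intro i
      simp only [hsdef]
      by_cases c : (i : ℕ) = 0
      · rw [if_pos c]; exact hαS
      · rw [if_neg c]; exact hβS
    have hget := get_nn n
    obtain ⟨m, hm⟩ := hS [n, n] ⟨n, rfl⟩ s hsinj hsmem
    rw [MatInt, Set.mem_iInter] at hm
    have hm0 : m ∈ A α n := by
      have h0 := hm ⟨0, by simp⟩
      rw [hget] at h0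
      have : s ⟨0, by simp⟩ = α := by simp [hsdef]
      rwa [this] at h0
    have hm1 : m ∈ A β n := by
      have h1 := hm ⟨1, by simp⟩
      rw [hget] at h1
      have : s ⟨1, by simp⟩ = β := by simp [hsdef]
      rwa [this] at h1
    obtain ⟨hmα, hge0⟩ := hm0
    obtain ⟨hmβ, hge1⟩ := hm1
    have hmem : m ∈ f α ∩ f β := ⟨hmα, hmβ⟩
    have := hb hmem
    simp only [hn] at hge0
    omega
  · -- case 2
    obtain ⟨n, rfl⟩ := ht
    set i0 : Fin ([n, n] : List ℕ).length := ⟨0, by simp⟩ with hi0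
    set i1 : Fin ([n, n] : List ℕ).length := ⟨1, by simp⟩ with hi1
    have hdisj0 : ∀ α ∈ D i0, ∀ β ∈ D i1, α ≠ β →
        ∀ m, m ∈ f α → m ∈ f β → m < n := by
      intro α hα β hβ hne m hmα hmβ
      by_contra hge
      push_neg at hge
      set s : Fin ([n, n] : List ℕ).length → Ordinal := fun i => if (i : ℕ) = 0 then α else β
        with hsdef
      have hsinj : Function.Injective s := by
        intro i j hij
        simp only [hsdef] at hij
        have hi : (i : ℕ) < 2 := i.isLt
        have hj : (j : ℕ) < 2 := j.isLt
        by_cases c1 : (i : ℕ) = 0 <;> by_cases c2 : (j : ℕ) = 0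
        · exact Fin.ext (c1.trans c2.symm)
        · rw [if_pos c1, if_neg c2] at hij; exact absurd hij hne
        · rw [if_neg c1, if_pos c2] at hij; exact absurd hij.symm hne
        · apply Fin.ext; omega
      have hsmem : ∀ i, s i ∈ D i := by
        intro i
        have hi : (i : ℕ) < 2 := i.isLt
        by_cases c : (i : ℕ) = 0
        · have : i = i0 := Fin.ext c
          rw [this]; simpa [hsdef, hi0] using hα
        · have c1 : (i : ℕ) = 1 := by omega
          have : i = i1 := Fin.ext c1
          rw [this]; simpa [hsdef, hi1] using hβ
      have hget := get_nn n

      have hemp := hD s hsinj hsmem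
      rw [MatInt, Set.eq_empty_iff_forall_notMem] at hemp
      apply hemp m
      rw [Set.mem_iInter]
      intro i
      rw [hget]
      by_cases c : (i : ℕ) = 0
      · have : s i = α := by simp only [hsdef]; exact if_pos c
        rw [this]
        exact ⟨hmα, hge⟩
      · have : s i = β := by simp only [hsdef]; exact if_neg c
        rw [this]
        exact ⟨hmβ, hge⟩
    -- transfer cofinal sets to κ.ord.toType
    have hcard : ∀ j : Fin ([n, n] : List ℕ).length,
        #{x : κ.ord.ToType | ((g.symm x : Set.Iio κ.ord) : Ordinal) ∈ D j} = κ := by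
      intro j
      apply le_antisymm
      · calc #{x : κ.ord.ToType | ((g.symm x : Set.Iio κ.ord) : Ordinal) ∈ D j}
            ≤ #κ.ord.ToType := mk_set_le _
          _ = κ := by rw [Cardinal.mk_toType, Cardinal.card_ord]
      · have h2 : κ = Order.cof κ.ord.ToType :=
          (hreg.cof_ord).symm.trans (Ordinal.cof_toType κ.ord).symm
        refine h2.trans_le (Order.cof_le ?_)
        intro a
        obtain ⟨β, hβ, hlt⟩ := (hDcof j).2 ((g.symm a : Set.Iio κ.ord) : Ordinal) (g.symm a).2
        have hβκ : β < κ.ord := (hDcof j).1 hβ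
        refine ⟨g ⟨β, hβκ⟩, ?_, ?_⟩
        · show ((g.symm (g ⟨β, hβκ⟩) : Set.Iio κ.ord) : Ordinal) ∈ D j
          rw [OrderIso.symm_apply_apply]
          exact hβ
        · have h2 : g.symm a < (⟨β, hβκ⟩ : Set.Iio κ.ord) := Subtype.coe_lt_coe.mp hlt
          have h3 : g (g.symm a) < g ⟨β, hβκ⟩ := (OrderIso.lt_iff_lt g).mpr h2
          rw [OrderIso.apply_symm_apply] at h3
          exact le_of_lt h3
    obtain ⟨E₀, E₁, hE₀sub, hE₁sub, hEdisj, hE₀card, hE₁card⟩ :=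
      split_lemma (le_of_lt hunc) (hcard i0) (hcard i1)
    set X : Set ℕ := ⋃ x ∈ E₀, {m | m ∈ F x ∧ n ≤ m} with hX
    have claim1 : ∀ x ∈ E₀, (F x \ X).Finite := by
      intro x hx
      apply (Set.finite_Iio n).subset
      rintro m ⟨hmF, hmX⟩
      by_contra hge
      simp only [Set.mem_Iio] at hge
      simp only [Set.mem_Iio, not_lt] at hge ⊢
      exact hmX (Set.mem_biUnion hx ⟨hmF, hge⟩)
    have claim2 : ∀ y ∈ E₁, (F y ∩ X).Finite := by
      intro y hy
      apply (Set.finite_Iio n).subset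
      rintro m ⟨hmF, hmX⟩
      obtain ⟨x, hx, hmx, hge⟩ : ∃ x ∈ E₀, m ∈ F x ∧ n ≤ m := by
        rw [hX] at hmX
        simp only [Set.mem_iUnion, Set.mem_setOf_eq] at hmX
        obtain ⟨x, hx, h1, h2⟩ := hmX
        exact ⟨x, hx, h1, h2⟩
      have hxy : x ≠ y := by
        rintro rfl
        exact (Set.disjoint_left.mp hEdisj hx) hy
      have hαβ : ((g.symm x : Set.Iio κ.ord) : Ordinal) ≠ ((g.symm y : Set.Iio κ.ord) : Ordinal) := by
        intro hh
        exact hxy (g.symm.injective (Subtype.ext hh))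
      have := hdisj0 _ (hE₀sub hx) _ (hE₁sub hy) hαβ m
        (by rw [hfF]; exact hmx) (by rw [hfF]; exact hmF)
      exact this
    apply hsep
    refine ⟨X, ?_, ?_⟩
    · apply le_antisymm
      · calc #{A : Set ℕ | A ∈ 𝓐 ∧ (A \ X).Finite}
            ≤ #↥𝓐 := mk_le_mk_of_subset (fun A hA => hA.1)
          _ = κ := hA
      · have himg : F '' E₀ ⊆ {A : Set ℕ | A ∈ 𝓐 ∧ (A \ X).Finite} := by
          rintro _ ⟨x, hx, rfl⟩
          exact ⟨hFmem x, claim1 x hx⟩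
        calc κ = #↥E₀ := hE₀card.symm
          _ = #↥(F '' E₀) := (mk_image_eq hFinj).symm
          _ ≤ _ := mk_le_mk_of_subset himg
    · apply le_antisymm
      · calc #{A : Set ℕ | A ∈ 𝓐 ∧ (A ∩ X).Finite}
            ≤ #↥𝓐 := mk_le_mk_of_subset (fun A hA => hA.1)
          _ = κ := hA
      · have himg : F '' E₁ ⊆ {A : Set ℕ | A ∈ 𝓐 ∧ (A ∩ X).Finite} := by
          rintro _ ⟨y, hy, rfl⟩
          exact ⟨hFmem y, claim2 y hy⟩
        calc κ = #↥E₁ := hE₁card.symm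
          _ = #↥(F '' E₁) := (mk_image_eq hFinj).symm
          _ ≤ _ := mk_le_mk_of_subset himg
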